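/- Let M be a forest (a possibly infinite acyclic simple graph), B a finite set of vertices of M, and A ⊆ B such that (A,B) is a minimal pair (with respect to the induced subgraph on B). Then B \ A is a singleton {b}. Moreover: (i) if δ(B) = δ(A), then b has exactly one neighbour in A; (ii) if δ(B) < δ(A), then b has at least two neighbours in A, and b is the unique vertex of M outside A adjacent to all of these neighbours (i.e., M contains exactly one copy of B over A). -/

import Mathlib

open SimpleGraph

/-- The predimension of a finite set `A` of vertices: `|A| - e(A)`, where `e(A)` is the
number of edges of the induced subgraph on `A`. -/
noncomputable def delta {V : Type*} (G : SimpleGraph V) (A : Finset V) : ℤ :=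
  (A.card : ℤ) - (Nat.card (G.induce (A : Set V)).edgeSet : ℤ)

/-- `A` is closed in `B` (`A ≤* B`): `A ⊆ B` and `δ(C) > δ(A)` for every finite `C` with
`A ⊊ C ⊆ B`. -/
def Closed {V : Type*} (G : SimpleGraph V) (A B : Finset V) : Prop :=
  A ⊆ B ∧ ∀ C : Finset V, A ⊂ C → C ⊆ B → delta G A < delta G C

/-- `A` is weakly closed in `B` (`A ≤ B`). -/
def WClosed {V : Type*} (G : SimpleGraph V) (A B : Finset V) : Prop :=
  A ⊆ B ∧ ∀ C : Finset V, A ⊆ C → C ⊆ B → delta G A ≤ delta G C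

/-- `A ≤* M` : `A` is closed in every finite superset inside the graph. -/
def ClosedIn {V : Type*} (G : SimpleGraph V) (A : Finset V) : Prop :=
  ∀ B : Finset V, A ⊆ B → Closed G A B

def WClosedIn {V : Type*} (G : SimpleGraph V) (A : Finset V) : Prop :=
  ∀ B : Finset V, A ⊆ B → WClosed G A B

/-- `(A,B)` is a minimal pair. -/
def MinPair {V : Type*} (G : SimpleGraph V) (A B : Finset V) : Prop :=
  A ⊆ B ∧ (∀ C : Finset V, A ⊆ C → C ⊂ B → Closed G A C) ∧ ¬ Closed G A B

def WMinPair {V : Type*} (G : SimpleGraph V) (A B : Finset V) : Prop :=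
  A ⊆ B ∧ (∀ C : Finset V, A ⊆ C → C ⊂ B → WClosed G A C) ∧ ¬ WClosed G A B

/-- `B` is an intrinsic extension of `A`. -/
def IntrinsicExt {V : Type*} (G : SimpleGraph V) (A B : Finset V) : Prop :=
  A ⊆ B ∧ ∀ C : Finset V, A ⊆ C → C ⊂ B → ¬ Closed G C B

def WIntrinsicExt {V : Type*} (G : SimpleGraph V) (A B : Finset V) : Prop :=
  A ⊆ B ∧ ∀ C : Finset V, A ⊆ C → C ⊂ B → ¬ WClosed G C B

/-- The closure `cl*_M(N)`. -/
def clStar {V : Type*} (G : SimpleGraph V) (N : Set V) : Set V :=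
  {b | ∃ A E : Finset V, (A : Set V) ⊆ N ∧ IntrinsicExt G A E ∧ b ∈ E}

/-- The weak closure `cl_M(N)`. -/
def clWeak {V : Type*} (G : SimpleGraph V) (N : Set V) : Set V :=
  {b | ∃ A E : Finset V, (A : Set V) ⊆ N ∧ WIntrinsicExt G A E ∧ b ∈ E}


section Helpers
variable {V : Type*} [DecidableEq V]

noncomputable def eF (G : SimpleGraph V) (S : Finset V) : Finset (Sym2 V) :=
  @Finset.filter _ (· ∈ G.edgeSet) (Classical.decPred _) S.sym2

noncomputable def nbr (G : SimpleGraph V) (b : V) (S : Finset V) : Finset V :=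
  @Finset.filter _ (fun a => G.Adj b a) (Classical.decPred _) S

lemma mem_eF {G : SimpleGraph V} {S : Finset V} {e : Sym2 V} :
    e ∈ eF G S ↔ e ∈ S.sym2 ∧ e ∈ G.edgeSet := @Finset.mem_filter _ _ (Classical.decPred _) _ _

lemma mem_nbr {G : SimpleGraph V} {b : V} {S : Finset V} {a : V} :
    a ∈ nbr G b S ↔ a ∈ S ∧ G.Adj b a := @Finset.mem_filter _ _ (Classical.decPred _) _ _

lemma card_edge_eq (G : SimpleGraph V) (S : Finset V) :
    Nat.card (G.induce (S : Set V)).edgeSet = (eF G S).card := by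
  set f : {x : V // x ∈ (S : Set V)} → V := Subtype.val with hf
  have hinj : Function.Injective (Sym2.map f) :=
    Sym2.map.injective Subtype.val_injective
  have himg : Sym2.map f '' (G.induce (S : Set V)).edgeSet = ↑(eF G S) := by
    ext e
    constructor
    · rintro ⟨e', he', rfl⟩
      induction e' using Sym2.ind with
      | _ x y =>
        have hadj : G.Adj ↑x ↑y := he'
        rw [Finset.mem_coe, mem_eF]
        constructor
        · simpa [Finset.mk_mem_sym2_iff, hf] using ⟨x.2, y.2⟩
        · exact hadj
    · intro he
      rw [Finset.mem_coe, mem_eF] at he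
      obtain ⟨h1, h2⟩ := he
      induction e using Sym2.ind with
      | _ x y =>
        rw [Finset.mk_mem_sym2_iff] at h1
        exact ⟨s(⟨x, h1.1⟩, ⟨y, h1.2⟩), h2, rfl⟩
  calc Nat.card (G.induce (S : Set V)).edgeSet
      = (G.induce (S : Set V)).edgeSet.ncard := Nat.card_coe_set_eq _
    _ = (Sym2.map f '' (G.induce (S : Set V)).edgeSet).ncard :=
        (Set.ncard_image_of_injective _ hinj).symm
    _ = (↑(eF G S) : Set (Sym2 V)).ncard := by rw [himg]
    _ = (eF G S).card := Set.ncard_coe_finset _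

lemma eF_insert (G : SimpleGraph V) {b : V} {S : Finset V} (hb : b ∉ S) :
    (eF G (insert b S)).card = (eF G S).card + (nbr G b S).card := by
  have hset : eF G (insert b S) = eF G S ∪ (nbr G b S).image (fun a => s(b, a)) := by
    ext e
    rw [mem_eF, Finset.sym2_insert, Finset.mem_union, Finset.mem_union, mem_eF]
    constructor
    · rintro ⟨h1 | h1, h2⟩
      · obtain ⟨a, ha, rfl⟩ := Finset.mem_image.mp h1
        have hadj : G.Adj b a := G.mem_edgeSet.mp h2
        refine Or.inr (Finset.mem_image.mpr ⟨a, ?_, rfl⟩)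
        rw [mem_nbr]
        refine ⟨(Finset.mem_insert.mp ha).resolve_left ?_, hadj⟩
        rintro rfl
        exact G.irrefl hadj
      · exact Or.inl ⟨h1, h2⟩
    · rintro (⟨h1, h2⟩ | h1)
      · exact ⟨Or.inr h1, h2⟩
      · obtain ⟨a, ha, rfl⟩ := Finset.mem_image.mp h1
        rw [mem_nbr] at ha
        exact ⟨Or.inl (Finset.mem_image.mpr ⟨a, Finset.mem_insert_of_mem ha.1, rfl⟩),
          G.mem_edgeSet.mpr ha.2⟩
  have hdisj : Disjoint (eF G S) ((nbr G b S).image (fun a => s(b, a))) := by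
    rw [Finset.disjoint_left]
    intro e he he'
    obtain ⟨a, _, rfl⟩ := Finset.mem_image.mp he'
    have := (mem_eF.mp he).1
    rw [Finset.mk_mem_sym2_iff] at this
    exact hb this.1
  have hinj : Set.InjOn (fun a => s(b, a)) ↑(nbr G b S) := by
    intro a1 h1 a2 h2 h12
    simp only [Sym2.eq_iff] at h12
    rcases h12 with ⟨-, h⟩ | ⟨h, h'⟩
    · exact h
    · exact absurd ((mem_nbr.mp (Finset.mem_coe.mp h1)).2) (by rw [h'] at *; exact fun hh => G.irrefl hh)
  rw [hset, Finset.card_union_of_disjoint hdisj, Finset.card_image_of_injOn hinj]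

lemma eF_union (G : SimpleGraph V) {S T : Finset V} (hST : Disjoint S T)
    (hcross : ∀ x ∈ S, ∀ y ∈ T, ¬ G.Adj x y) :
    (eF G (S ∪ T)).card = (eF G S).card + (eF G T).card := by
  have hset : eF G (S ∪ T) = eF G S ∪ eF G T := by
    ext e
    induction e using Sym2.ind with
    | _ x y =>
      rw [Finset.mem_union, mem_eF, mem_eF, mem_eF, Finset.mk_mem_sym2_iff,
        Finset.mk_mem_sym2_iff, Finset.mk_mem_sym2_iff, Finset.mem_union, Finset.mem_union]
      constructor
      · rintro ⟨⟨hx | hx, hy | hy⟩, h2⟩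
        · exact Or.inl ⟨⟨hx, hy⟩, h2⟩
        · exact absurd (G.mem_edgeSet.mp h2) (hcross x hx y hy)
        · exact absurd (G.mem_edgeSet.mp h2).symm (hcross y hy x hx)
        · exact Or.inr ⟨⟨hx, hy⟩, h2⟩
      · rintro (⟨⟨hx, hy⟩, h2⟩ | ⟨⟨hx, hy⟩, h2⟩)
        · exact ⟨⟨Or.inl hx, Or.inl hy⟩, h2⟩
        · exact ⟨⟨Or.inr hx, Or.inr hy⟩, h2⟩
  have hdisj : Disjoint (eF G S) (eF G T) := by
    rw [Finset.disjoint_left]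
    intro e he he'
    induction e using Sym2.ind with
    | _ x y =>
      have h1 := (mem_eF.mp he).1
      have h2 := (mem_eF.mp he').1
      rw [Finset.mk_mem_sym2_iff] at h1 h2
      exact (Finset.disjoint_left.mp hST) h1.1 h2.1
  rw [hset, Finset.card_union_of_disjoint hdisj]

lemma handshake (G : SimpleGraph V) (S : Finset V) :
    ∑ s ∈ S, (nbr G s S).card = 2 * (eF G S).card := by
  classical
  letI : DecidableRel (G.induce (S : Set V)).Adj := Classical.decRel _
  have hdeg : ∀ v : (S : Set V), (G.induce (S : Set V)).degree v = (nbr G ↑v S).card := by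
    intro v
    rw [← SimpleGraph.card_neighborFinset_eq_degree, SimpleGraph.neighborFinset_eq_filter]
    refine Finset.card_bij (fun w _ => (w : V)) ?_ ?_ ?_
    · intro w hw
      rw [mem_nbr]
      exact ⟨w.2, (Finset.mem_filter.mp hw).2⟩
    · intro w1 _ w2 _ h12
      exact Subtype.ext h12
    · intro a ha
      rw [mem_nbr] at ha
      exact ⟨⟨a, ha.1⟩, Finset.mem_filter.mpr ⟨Finset.mem_univ _, ha.2⟩, rfl⟩
  have h := SimpleGraph.sum_degrees_eq_twice_card_edges (G.induce (S : Set V))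
  have hcard : (G.induce (S : Set V)).edgeFinset.card = (eF G S).card := by
    rw [SimpleGraph.edgeFinset_card, ← Nat.card_eq_fintype_card, card_edge_eq]
  have hsum : ∑ v : (S : Set V), (nbr G (↑v) S).card = ∑ s ∈ S, (nbr G s S).card := by
    refine Finset.sum_bij (fun (v : (S : Set V)) _ => (v : V)) ?_ ?_ ?_ ?_
    · intro v _
      exact v.2
    · intro v1 _ v2 _ h12
      exact Subtype.ext h12
    · intro s hs
      exact ⟨⟨s, hs⟩, Finset.mem_univ _, rfl⟩
    · intro v _
      rfl
  rw [← hsum, ← hcard, ← h]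
  exact Finset.sum_congr rfl (fun v _ => (hdeg v).symm)

lemma induce_isAcyclic {G : SimpleGraph V} (hG : G.IsAcyclic) (S : Finset V) :
    (G.induce (S : Set V)).IsAcyclic := by
  intro v c hc
  have hmap := hc.map (f := (SimpleGraph.Embedding.induce (S : Set V)).toHom)
    (Subtype.val_injective)
  exact hG _ hmap

lemma acyclic_bound {G : SimpleGraph V} (hG : G.IsAcyclic) :
    ∀ n (S : Finset V), S.card = n → S.Nonempty → (eF G S).card + 1 ≤ S.card := by
  intro n
  induction n using Nat.strong_induction_on with
  | _ n ih =>
    intro S hn hS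
    classical
    by_cases hc : (G.induce (S : Set V)).Connected
    · letI : DecidableRel (G.induce (S : Set V)).Adj := Classical.decRel _
      have htree : (G.induce (S : Set V)).IsTree := ⟨hc, induce_isAcyclic hG S⟩
      have := htree.card_edgeFinset
      rw [SimpleGraph.edgeFinset_card, ← Nat.card_eq_fintype_card, card_edge_eq] at this
      rw [this]
      simp [Fintype.card_coe]
    · have hne : Nonempty (S : Set V) := by
        obtain ⟨x, hx⟩ := hS
        exact ⟨⟨x, hx⟩⟩
      rw [SimpleGraph.connected_iff] at hc
      push_neg at hc
      have hnp : ¬ (G.induce (S : Set V)).Preconnected := fun hp => (hc hp).false hne.some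
      rw [SimpleGraph.Preconnected] at hnp
      push_neg at hnp
      obtain ⟨u, v, huv⟩ := hnp
      set S1 : Finset V := S.filter
        (fun w => ∃ hw : w ∈ S, (G.induce (S : Set V)).Reachable u ⟨w, hw⟩) with hS1
      have hS1S : S1 ⊆ S := Finset.filter_subset _ _
      set S2 : Finset V := S \ S1 with hS2def
      have hu1 : (u : V) ∈ S1 := by
        rw [hS1, Finset.mem_filter]
        exact ⟨u.2, u.2, by exact SimpleGraph.Reachable.refl _⟩
      have hv2 : (v : V) ∈ S2 := by
        rw [hS2def, Finset.mem_sdiff]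
        refine ⟨v.2, ?_⟩
        rw [hS1, Finset.mem_filter]
        rintro ⟨-, hw, hr⟩
        exact huv (by convert hr)
      have hcross : ∀ x ∈ S1, ∀ y ∈ S2, ¬ G.Adj x y := by
        intro x hx y hy hadj
        rw [hS1, Finset.mem_filter] at hx
        obtain ⟨hxS, hx', hr⟩ := hx
        rw [hS2def, Finset.mem_sdiff] at hy
        obtain ⟨hyS, hy'⟩ := hy
        apply hy'
        rw [hS1, Finset.mem_filter]
        refine ⟨hyS, hyS, ?_⟩
        have hadj' : (G.induce (S : Set V)).Adj ⟨x, hx'⟩ ⟨y, hyS⟩ := hadj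
        exact (hr.trans hadj'.reachable)
      have hdisj : Disjoint S1 S2 := Finset.disjoint_sdiff
      have hunion : S1 ∪ S2 = S := Finset.union_sdiff_of_subset hS1S
      have hcards : S1.card + S2.card = S.card := by
        rw [← Finset.card_union_of_disjoint hdisj, hunion]
      have h1ne : S1.Nonempty := ⟨u, hu1⟩
      have h2ne : S2.Nonempty := ⟨v, hv2⟩
      have h1lt : S1.card < n := by
        have := Finset.card_pos.mpr h2ne
        omega
      have h2lt : S2.card < n := by
        have := Finset.card_pos.mpr h1ne
        omega
      have ih1 := ih S1.card h1lt S1 rfl h1ne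
      have ih2 := ih S2.card h2lt S2 rfl h2ne
      have he : (eF G S).card = (eF G S1).card + (eF G S2).card := by
        rw [← hunion]
        exact eF_union G hdisj hcross
      omega


lemma delta_insert (G : SimpleGraph V) {b : V} {S : Finset V} (hb : b ∉ S) :
    delta G (insert b S) = delta G S + 1 - (nbr G b S).card := by
  rw [delta, delta, card_edge_eq, card_edge_eq, eF_insert G hb,
    Finset.card_insert_of_notMem hb]
  push_cast
  ring

lemma natCard_nbr (G : SimpleGraph V) (b : V) (A : Finset V) :
    Nat.card {a : V // a ∈ A ∧ G.Adj b a} = (nbr G b A).card := by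
  have hset : {a : V | a ∈ A ∧ G.Adj b a} = ↑(nbr G b A) := by
    ext a
    rw [Set.mem_setOf_eq, Finset.mem_coe, mem_nbr]
  calc Nat.card {a : V // a ∈ A ∧ G.Adj b a}
      = ({a : V | a ∈ A ∧ G.Adj b a}).ncard := Nat.card_coe_set_eq _
    _ = (↑(nbr G b A) : Set V).ncard := by rw [hset]
    _ = (nbr G b A).card := Set.ncard_coe_finset _

end Helpers

/-- Let `M` be a (possibly infinite) forest, `B` a finite set of vertices
and `A ⊆ B` with `(A,B)` a minimal pair. Then `B \ A` is a singleton `{b}`; moreover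
(i) if `δ(B) = δ(A)` then `b` has exactly one neighbour in `A`; (ii) if `δ(B) < δ(A)`
then `b` has at least two neighbours in `A` and `b` is the unique vertex of `M`
outside `A` adjacent to all of these neighbours. -/
theorem stmt_6 {V : Type*} [DecidableEq V] (G : SimpleGraph V) (hG : G.IsAcyclic)
    (A B : Finset V) (h : MinPair G A B) :
    ∃ b : V, B \ A = {b} ∧
      (delta G B = delta G A → Nat.card {a : V // a ∈ A ∧ G.Adj b a} = 1) ∧
      (delta G B < delta G A →
        2 ≤ Nat.card {a : V // a ∈ A ∧ G.Adj b a} ∧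
        ∀ b' : V, b' ∉ A → (∀ a ∈ A, G.Adj b a → G.Adj b' a) → b' = b) := by
  classical
  obtain ⟨hAB, hmin, hnc⟩ := h
  have hkey : ∀ C : Finset V, A ⊂ C → C ⊂ B → delta G A < delta G C := by
    intro C h1 h2
    exact (hmin C h1.subset h2).2 C h1 (subset_refl C)
  have hAneB : A ≠ B := by
    rintro rfl
    exact hnc ⟨subset_rfl, fun C h1 h2 => absurd h2 h1.2⟩
  have hssAB : A ⊂ B := Finset.ssubset_iff_subset_ne.mpr ⟨hAB, hAneB⟩
  have hdB : delta G B ≤ delta G A := by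
    by_contra hlt
    push_neg at hlt
    apply hnc
    refine ⟨hAB, fun C h1 h2 => ?_⟩
    rcases eq_or_ne C B with rfl | hCB
    · exact hlt
    · exact hkey C h1 (Finset.ssubset_iff_subset_ne.mpr ⟨h2, hCB⟩)
  set S := B \ A with hSdef
  have hSne : S.Nonempty := by
    obtain ⟨x, hxB, hxA⟩ := Finset.exists_of_ssubset hssAB
    exact ⟨x, Finset.mem_sdiff.mpr ⟨hxB, hxA⟩⟩
  have hScard : S.card = 1 := by
    by_contra hS1
    have h2le : 2 ≤ S.card := by
      have := Finset.card_pos.mpr hSne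
      omega
    have step1 : ∀ s ∈ S, (nbr G s A).card = 0 := by
      intro s hs
      obtain ⟨hsB, hsA⟩ := Finset.mem_sdiff.mp hs
      have hC1 : A ⊂ insert s A := Finset.ssubset_insert hsA
      have hC2 : insert s A ⊂ B := by
        rw [Finset.ssubset_iff_subset_ne]
        refine ⟨Finset.insert_subset hsB hAB, ?_⟩
        obtain ⟨t, ht, hts⟩ := Finset.exists_mem_ne (s := S) (by omega) s
        obtain ⟨htB, htA⟩ := Finset.mem_sdiff.mp ht
        intro hEq
        have : t ∈ insert s A := hEq ▸ htB
        rcases Finset.mem_insert.mp this with h | h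
        · exact hts h
        · exact htA h
      have hk := hkey _ hC1 hC2
      rw [delta_insert G hsA] at hk
      have : ((nbr G s A).card : ℤ) < 1 := by linarith
      exact_mod_cast Nat.lt_one_iff.mp (by exact_mod_cast this)
    have step2 : ∀ s ∈ S, 2 ≤ (nbr G s S).card := by
      intro s hs
      obtain ⟨hsB, hsA⟩ := Finset.mem_sdiff.mp hs
      have hCsub : A ⊆ B.erase s := fun a ha =>
        Finset.mem_erase.mpr ⟨fun h => hsA (h ▸ ha), hAB ha⟩
      have hC2 : B.erase s ⊂ B := Finset.erase_ssubset hsB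
      have hAC : A ⊂ B.erase s := by
        obtain ⟨t, ht, hts⟩ := Finset.exists_mem_ne (s := S) (by omega) s
        obtain ⟨htB, htA⟩ := Finset.mem_sdiff.mp ht
        exact (Finset.ssubset_iff_of_subset hCsub).mpr
          ⟨t, Finset.mem_erase.mpr ⟨hts, htB⟩, htA⟩
      have hkC := hkey _ hAC hC2
      have hsnot : s ∉ B.erase s := Finset.notMem_erase s B
      have hdel : delta G B = delta G (B.erase s) + 1 - (nbr G s (B.erase s)).card := by
        conv_lhs => rw [← Finset.insert_erase hsB]
        exact delta_insert G hsnot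
      have hsplit : B.erase s = A ∪ S.erase s := by
        ext x
        rw [Finset.mem_erase, Finset.mem_union, Finset.mem_erase, hSdef, Finset.mem_sdiff]
        constructor
        · rintro ⟨hxs, hxB⟩
          by_cases hxA : x ∈ A
          · exact Or.inl hxA
          · exact Or.inr ⟨hxs, hxB, hxA⟩
        · rintro (hxA | ⟨hxs, hxB, hxA⟩)
          · exact ⟨fun h => hsA (h ▸ hxA), hAB hxA⟩
          · exact ⟨hxs, hxB⟩
      have hdisjA : Disjoint A (S.erase s) := by
        have : Disjoint A S := by
          rw [hSdef]
          exact Finset.disjoint_sdiff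
        exact this.mono_right (Finset.erase_subset _ _)
      have hnbrsplit : (nbr G s (B.erase s)).card
          = (nbr G s A).card + (nbr G s (S.erase s)).card := by
        rw [hsplit]
        unfold nbr
        rw [Finset.filter_union]
        exact Finset.card_union_of_disjoint (Finset.disjoint_filter_filter hdisjA)
      rw [step1 s hs, Nat.zero_add] at hnbrsplit
      rw [hnbrsplit] at hdel
      have h2 : 2 ≤ (nbr G s (S.erase s)).card := by
        have : (1 : ℤ) < ((nbr G s (S.erase s)).card : ℤ) := by linarith
        exact_mod_cast this
      calc 2 ≤ (nbr G s (S.erase s)).card := h2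
        _ ≤ (nbr G s S).card := by
            apply Finset.card_le_card
            unfold nbr
            exact Finset.filter_subset_filter _ (Finset.erase_subset _ _)
    have hsum : 2 * S.card ≤ ∑ s ∈ S, (nbr G s S).card := by
      calc 2 * S.card = ∑ _s ∈ S, 2 := by
            rw [Finset.sum_const, smul_eq_mul, mul_comm]
        _ ≤ ∑ s ∈ S, (nbr G s S).card := Finset.sum_le_sum step2
    rw [handshake G S] at hsum
    have hb := acyclic_bound hG S.card S rfl hSne
    omega
  obtain ⟨b, hbS⟩ := Finset.card_eq_one.mp hScard
  have hbmem : b ∈ S := hbS ▸ Finset.mem_singleton_self b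
  obtain ⟨hbB, hbA⟩ := Finset.mem_sdiff.mp hbmem
  have hBinsert : B = insert b A := by
    have h1 : A ∪ S = B := Finset.union_sdiff_of_subset hAB
    rw [← h1, hbS, Finset.insert_eq, Finset.union_comm]
  have hdel : delta G B = delta G A + 1 - (nbr G b A).card := by
    conv_lhs => rw [hBinsert]
    exact delta_insert G hbA
  have hnc' : Nat.card {a : V // a ∈ A ∧ G.Adj b a} = (nbr G b A).card :=
    natCard_nbr G b A
  refine ⟨b, hbS, ?_, ?_⟩
  · intro heq
    rw [hdel] at heq
    rw [hnc']
    have : ((nbr G b A).card : ℤ) = 1 := by linarith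
    exact_mod_cast this
  · intro hlt
    rw [hdel] at hlt
    have h2n : 2 ≤ (nbr G b A).card := by
      have : (1 : ℤ) < ((nbr G b A).card : ℤ) := by linarith
      exact_mod_cast this
    refine ⟨hnc' ▸ h2n, ?_⟩
    intro b' hb'A hadj
    by_contra hne
    obtain ⟨a1, ha1, a2, ha2, ha12⟩ := Finset.one_lt_card.mp (by omega : 1 < (nbr G b A).card)
    obtain ⟨ha1A, hba1⟩ := mem_nbr.mp ha1
    obtain ⟨ha2A, hba2⟩ := mem_nbr.mp ha2
    have hb'a1 : G.Adj b' a1 := hadj a1 ha1A hba1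
    have hb'a2 : G.Adj b' a2 := hadj a2 ha2A hba2
    have hba1' : b ≠ a1 := fun h => hbA (h ▸ ha1A)
    have hba2' : b ≠ a2 := fun h => hbA (h ▸ ha2A)
    have hb'a1' : b' ≠ a1 := fun h => hb'A (h ▸ ha1A)
    have hb'a2' : b' ≠ a2 := fun h => hb'A (h ▸ ha2A)
    have hpu := SimpleGraph.isAcyclic_iff_path_unique.mp hG
    have hp1 : (SimpleGraph.Walk.cons hba1
        (SimpleGraph.Walk.cons hb'a1.symm SimpleGraph.Walk.nil)).IsPath := by
      rw [SimpleGraph.Walk.cons_isPath_iff]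
      refine ⟨?_, ?_⟩
      · rw [SimpleGraph.Walk.cons_isPath_iff]
        refine ⟨SimpleGraph.Walk.IsPath.nil, ?_⟩
        rw [SimpleGraph.Walk.support_nil]
        simp [hb'a1'.symm]
      · rw [SimpleGraph.Walk.support_cons, SimpleGraph.Walk.support_nil]
        simp only [List.mem_cons, List.not_mem_nil, or_false]
        push_neg
        exact ⟨hba1', fun hh => hne hh.symm⟩
    have hp2 : (SimpleGraph.Walk.cons hba2
        (SimpleGraph.Walk.cons hb'a2.symm SimpleGraph.Walk.nil)).IsPath := by
      rw [SimpleGraph.Walk.cons_isPath_iff]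
      refine ⟨?_, ?_⟩
      · rw [SimpleGraph.Walk.cons_isPath_iff]
        refine ⟨SimpleGraph.Walk.IsPath.nil, ?_⟩
        rw [SimpleGraph.Walk.support_nil]
        simp [hb'a2'.symm]
      · rw [SimpleGraph.Walk.support_cons, SimpleGraph.Walk.support_nil]
        simp only [List.mem_cons, List.not_mem_nil, or_false]
        push_neg
        exact ⟨hba2', fun hh => hne hh.symm⟩
    have heqp := hpu ⟨_, hp1⟩ ⟨_, hp2⟩
    have hval := congrArg (fun p : G.Path b b' => (p : G.Walk b b').support) heqp
    simp only [SimpleGraph.Walk.support_cons, SimpleGraph.Walk.support_nil] at hval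
    simp only [List.cons.injEq] at hval
    exact ha12 hval.2.1
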